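/- Any perfect matching P of {1,…,n} containing the pair {i,j} decomposes as {i,j} ⊔ P' where P' is a perfect matching of {1,…,n}∖{i,j}, and sign(P) = (-1)^{i+j+1}·sign(P'). -/

import Mathlib

open Matrix Polynomial

namespace PaperPf

variable {R : Type*} [CommRing R]

/-- Position `2i`, the slot of the first element of the `i`-th pair. -/
def lo {m : ℕ} (i : Fin m) : Fin (2 * m) := ⟨2 * i.val, by have := i.isLt; omega⟩

/-- Position `2i+1`, the slot of the second element of the `i`-th pair. -/
def hi {m : ℕ} (i : Fin m) : Fin (2 * m) := ⟨2 * i.val + 1, by have := i.isLt; omega⟩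

/-- Permutations of `Fin (2m)` canonically encoding perfect matchings of
`{0,…,2m-1}`: the pairs are `{σ(2i), σ(2i+1)}`, each pair is listed with its
smaller element first, and pairs occur in increasing order of first elements.
The sign of the matching is the sign of this permutation. -/
def matchings (m : ℕ) : Finset (Equiv.Perm (Fin (2 * m))) :=
  Finset.univ.filter fun σ =>
    (∀ i : Fin m, σ (lo i) < σ (hi i)) ∧
    (∀ i j : Fin m, i < j → σ (lo i) < σ (lo j))

/-- The Pfaffian of a `2m × 2m` matrix, defined as the signed sum over all
perfect matchings of the products of the corresponding entries. -/
def pf {m : ℕ} (A : Matrix (Fin (2 * m)) (Fin (2 * m)) R) : R :=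
  ∑ σ ∈ matchings m,
    (Equiv.Perm.sign σ : ℤ) • ∏ i : Fin m, A (σ (lo i)) (σ (hi i))

end PaperPf

namespace PaperPf

variable {R : Type*} [CommRing R]

lemma card_compl_pair {m : ℕ} {i j : Fin (2 * (m + 1))} (h : ¬ i = j) :
    (({i, j}ᶜ : Finset (Fin (2 * (m + 1)))).card = 2 * m) := by
  rw [Finset.card_compl, Finset.card_insert_of_notMem (by simpa using h),
    Finset.card_singleton]
  simp only [Fintype.card_fin]
  omega

/-- The increasing enumeration of `{0,…,2(m+1)-1} \ {i,j}`. -/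
def delEmb {m : ℕ} (i j : Fin (2 * (m + 1))) (h : i ≠ j) :
    Fin (2 * m) → Fin (2 * (m + 1)) :=
  fun k => (({i, j}ᶜ : Finset (Fin (2 * (m + 1)))).orderIsoOfFin
    (card_compl_pair h) k : Fin (2 * (m + 1)))

/-- `A⟨i,j⟩`: the matrix obtained from `A` by deleting the `i`-th and `j`-th
rows and columns (junk value `0` if `i = j`). -/
def minor {m : ℕ} (A : Matrix (Fin (2 * (m + 1))) (Fin (2 * (m + 1))) R)
    (i j : Fin (2 * (m + 1))) : Matrix (Fin (2 * m)) (Fin (2 * m)) R :=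
  if h : i = j then 0
  else A.submatrix (delEmb i j h) (delEmb i j h)

/-- The Pfaff-adjugate matrix of `A`. -/
def Padj {m : ℕ} (A : Matrix (Fin (2 * (m + 1))) (Fin (2 * (m + 1))) R) :
    Matrix (Fin (2 * (m + 1))) (Fin (2 * (m + 1))) R :=
  fun i j =>
    if i = j then 0
    else if i < j then (-1 : R) ^ (i.val + j.val) * pf (minor A i j)
    else (-1 : R) ^ (i.val + j.val + 1) * pf (minor A i j)

end PaperPf

namespace PaperPf

open Equiv Equiv.Perm Fin

/-- The permutation of `Fin (n+1)` moving `i` to `0`, `j` to `1`, and the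
complement (in increasing order) to `2, 3, …`. -/
def Wp {n : ℕ} (i j : Fin (n + 1)) : Equiv.Perm (Fin (n + 1)) :=
  Equiv.swap 0 1 * j.cycleRange * i.cycleRange

section WpLemmas

variable {n : ℕ} {i j : Fin (n + 1)}

lemma Wp_apply_left (hij : i < j) : Wp i j i = 0 := by
  have h0j : (0 : Fin (n+1)) < j := lt_of_le_of_lt (Fin.zero_le i) hij
  simp only [Wp, Perm.mul_apply, Fin.cycleRange_self, Fin.cycleRange_of_lt h0j,
    zero_add, Equiv.swap_apply_right]

lemma Wp_apply_right (hij : i < j) : Wp i j j = 1 := by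
  simp only [Wp, Perm.mul_apply, Fin.cycleRange_of_gt hij, Fin.cycleRange_self,
    Equiv.swap_apply_left]

lemma val_one_aux (hij : i < j) : (1 : Fin (n + 1)).val = 1 := by
  have hij' : i.val < j.val := hij
  have hjn : j.val < n + 1 := j.isLt
  have hn : 1 < n + 1 := by omega
  rw [Fin.val_one', Nat.mod_eq_of_lt hn]

lemma Wp_val_other (hij : i < j) {x : Fin (n + 1)} (hx1 : x ≠ i) (hx2 : x ≠ j) :
    (Wp i j x).val =
      if x.val < i.val then x.val + 2 else if x.val < j.val then x.val + 1 else x.val := by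
  have hij' : i.val < j.val := hij
  have hjn : j.val < n + 1 := j.isLt
  have h1v : (1 : Fin (n + 1)).val = 1 := val_one_aux hij
  have h0v : (0 : Fin (n + 1)).val = 0 := rfl
  have swapv : ∀ y : Fin (n + 1), 2 ≤ y.val → ((Equiv.swap (0:Fin (n+1)) 1) y).val = y.val := by
    intro y hy
    rw [Equiv.swap_apply_of_ne_of_ne]
    · intro h; apply_fun Fin.val at h; omega
    · intro h; apply_fun Fin.val at h; omega
  rcases lt_trichotomy x.val i.val with hxi | hxi | hxi
  · have h1 : (i.cycleRange x).val = x.val + 1 := Fin.coe_cycleRange_of_lt hxi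
    have h2 : (j.cycleRange (i.cycleRange x)).val = x.val + 1 + 1 := by
      have hlt : (i.cycleRange x) < j := by rw [Fin.lt_def, h1]; omega
      rw [Fin.coe_cycleRange_of_lt hlt, h1]
    simp only [Wp, Perm.mul_apply]
    rw [swapv _ (by omega), h2]
    simp [hxi]
  · exact absurd (Fin.ext hxi) hx1
  · rcases lt_trichotomy x.val j.val with hxj | hxj | hxj
    · have h1 : i.cycleRange x = x := Fin.cycleRange_of_gt (by rwa [Fin.lt_def])
      have h2 : (j.cycleRange x).val = x.val + 1 := Fin.coe_cycleRange_of_lt (by rwa [Fin.lt_def])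
      simp only [Wp, Perm.mul_apply, h1]
      rw [swapv _ (by omega), h2]
      rw [if_neg (by omega), if_pos hxj]
    · exact absurd (Fin.ext hxj) hx2
    · have h1 : i.cycleRange x = x := Fin.cycleRange_of_gt (by rw [Fin.lt_def]; omega)
      have h2 : j.cycleRange x = x := Fin.cycleRange_of_gt (by rwa [Fin.lt_def])
      simp only [Wp, Perm.mul_apply, h1, h2]
      rw [swapv _ (by omega)]
      rw [if_neg (by omega), if_neg (by omega)]

lemma Wp_sign (hij : i < j) :
    ((Equiv.Perm.sign (Wp i j) : ℤˣ) : ℤ) = (-1) ^ (i.val + j.val + 1) := by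
  have h01 : (0 : Fin (n + 1)) ≠ 1 := by
    intro h
    have h1v : (1 : Fin (n + 1)).val = 1 := val_one_aux hij
    have h' := congrArg Fin.val h
    rw [Fin.val_zero, h1v] at h'
    exact absurd h' (by omega)
  rw [Wp, _root_.map_mul, _root_.map_mul, Equiv.Perm.sign_swap h01, Fin.sign_cycleRange,
    Fin.sign_cycleRange]
  push_cast [Units.val_mul]
  ring

end WpLemmas

lemma lo_val {m : ℕ} (l : Fin m) : (lo l).val = 2 * l.val := rfl

lemma hi_val {m : ℕ} (l : Fin m) : (hi l).val = 2 * l.val + 1 := rfl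

/-- `0` as an element of `Fin (2*(m+1))`. -/
def zeroF (m : ℕ) : Fin (2 * (m + 1)) := ⟨0, by omega⟩

/-- `1` as an element of `Fin (2*(m+1))`. -/
def oneF (m : ℕ) : Fin (2 * (m + 1)) := ⟨1, by omega⟩

/-- `pad t = t + 2` as an element of `Fin (2*(m+1))`. -/
def pad {m : ℕ} (t : Fin (2 * m)) : Fin (2 * (m + 1)) :=
  ⟨t.val + 2, by have := t.isLt; omega⟩

/-- `Wp` specialized to the index `2*(m+1)`. -/
def Wp2 {m : ℕ} (i j : Fin (2 * (m + 1))) : Equiv.Perm (Fin (2 * (m + 1))) :=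
  Wp (n := 2 * m + 1) i j

section Wp2Lemmas

variable {m : ℕ} {i j : Fin (2 * (m + 1))}

lemma Wp2_apply_left (hij : i < j) : Wp2 i j i = zeroF m := by
  have h := Wp_apply_left (n := 2 * m + 1) (i := i) (j := j) hij
  exact h

lemma Wp2_apply_right (hij : i < j) : Wp2 i j j = oneF m := by
  have h := Wp_apply_right (n := 2 * m + 1) (i := i) (j := j) hij
  exact h.trans (Fin.ext (val_one_aux (n := 2 * m + 1) hij))

lemma Wp2_val_other (hij : i < j) {x : Fin (2 * (m + 1))} (hx1 : x ≠ i) (hx2 : x ≠ j) :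
    (Wp2 i j x).val =
      if x.val < i.val then x.val + 2 else if x.val < j.val then x.val + 1 else x.val :=
  Wp_val_other (n := 2 * m + 1) hij hx1 hx2

lemma Wp2_sign (hij : i < j) :
    ((Equiv.Perm.sign (Wp2 i j) : ℤˣ) : ℤ) = (-1) ^ (i.val + j.val + 1) :=
  Wp_sign (n := 2 * m + 1) hij

end Wp2Lemmas

section DelEmbLemmas

variable {m : ℕ} {i j : Fin (2 * (m + 1))}

lemma delEmb_mem (h : i ≠ j) (t : Fin (2 * m)) :
    delEmb i j h t ≠ i ∧ delEmb i j h t ≠ j := by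
  have hmem : delEmb i j h t ∈ ({i, j}ᶜ : Finset (Fin (2 * (m + 1)))) :=
    (({i, j}ᶜ : Finset (Fin (2 * (m + 1)))).orderIsoOfFin (card_compl_pair h) t).2
  rw [Finset.mem_compl, Finset.mem_insert, Finset.mem_singleton, not_or] at hmem
  exact hmem

lemma delEmb_strictMono (h : i ≠ j) : StrictMono (delEmb i j h) := by
  intro a b hab
  exact (({i, j}ᶜ : Finset (Fin (2 * (m + 1)))).orderIsoOfFin
    (card_compl_pair h)).strictMono hab

lemma delEmb_surj (h : i ≠ j) {x : Fin (2 * (m + 1))} (hx1 : x ≠ i) (hx2 : x ≠ j) :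
    ∃ t, delEmb i j h t = x := by
  have hx : x ∈ ({i, j}ᶜ : Finset (Fin (2 * (m + 1)))) := by simp [hx1, hx2]
  obtain ⟨t, ht⟩ := (({i, j}ᶜ : Finset (Fin (2 * (m + 1)))).orderIsoOfFin
    (card_compl_pair h)).surjective ⟨x, hx⟩
  exact ⟨t, congrArg Subtype.val ht⟩

lemma delEmb_val (h : i ≠ j) (hij : i < j) (t : Fin (2 * m)) :
    (delEmb i j h t).val =
      if t.val < i.val then t.val else if t.val + 1 < j.val then t.val + 1 else t.val + 2 := by
  have hij' : i.val < j.val := hij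
  have hjn : j.val < 2 * (m + 1) := j.isLt
  set f : Fin (2 * m) → Fin (2 * (m + 1)) := fun t =>
    ⟨if t.val < i.val then t.val else if t.val + 1 < j.val then t.val + 1 else t.val + 2,
      by have := t.isLt; split_ifs <;> omega⟩ with hf
  have hfs : ∀ t, f t ∈ ({i, j}ᶜ : Finset (Fin (2 * (m + 1)))) := by
    intro t
    simp only [Finset.mem_compl, Finset.mem_insert, Finset.mem_singleton, not_or, hf,
      Fin.ext_iff]
    constructor <;> split_ifs <;> omega
  have hmono : StrictMono f := by
    intro a b hab
    have hab' : a.val < b.val := hab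
    simp only [hf, Fin.lt_def]
    split_ifs <;> omega
  have huniq := Finset.orderEmbOfFin_unique (card_compl_pair h) hfs hmono
  have heq : delEmb i j h t = f t := by
    rw [delEmb, Finset.coe_orderIsoOfFin_apply, ← huniq]
  rw [heq]

lemma Wp2_apply_delEmb (hij : i < j) (t : Fin (2 * m)) :
    Wp2 i j (delEmb i j hij.ne t) = pad t := by
  apply Fin.ext
  obtain ⟨hne1, hne2⟩ := delEmb_mem hij.ne t
  rw [Wp2_val_other hij hne1 hne2]
  have hd := delEmb_val hij.ne hij t
  have hij' : i.val < j.val := hij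
  show _ = t.val + 2
  split_ifs at hd ⊢ <;> omega

end DelEmbLemmas

lemma succAbove_val {m : ℕ} (k : Fin (m + 1)) (l : Fin m) :
    (k.succAbove l).val = if l.val < k.val then l.val else l.val + 1 := by
  rcases lt_or_ge (l.val) k.val with h | h
  · rw [Fin.succAbove_of_castSucc_lt _ _ (by rwa [Fin.lt_def])]
    simp [h]
  · rw [Fin.succAbove_of_le_castSucc _ _ (by rwa [Fin.le_def])]
    rw [Fin.val_succ, if_neg (by omega)]

/-- The equivalence between `Fin (2*m)` and the elements of
`Fin (2*(m+1))` with value at least `2`. -/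
def shiftEquiv' (m : ℕ) : Fin (2 * m) ≃ {x : Fin (2 * (m + 1)) // 2 ≤ x.val} where
  toFun t := ⟨pad t, by simp [pad]⟩
  invFun x := ⟨x.1.val - 2, by have := x.1.isLt; have := x.2; omega⟩
  left_inv t := by apply Fin.ext; simp [pad]
  right_inv x := by
    apply Subtype.ext; apply Fin.ext
    have := x.2
    simp [pad]
    omega

end PaperPf

open PaperPf

/-- Any perfect matching `P` of `{0,…,2(m+1)-1}` containing the
pair `{i,j}` (with `i < j`) decomposes as `{i,j} ⊔ P'` where `P'` is a perfect
matching of the complement of `{i,j}`, and `sign(P) = (-1)^{i+j+1}·sign(P')`.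
Matchings are encoded by their canonical permutations; the matching `P'` of
the complement is encoded by a matching `σ'` of `Fin (2m)` transported by the
increasing enumeration `delEmb i j` of the complement of `{i,j}`. -/
theorem matching_erase_pair {m : ℕ}
    (i j : Fin (2 * (m + 1))) (hij : i < j)
    (σ : Equiv.Perm (Fin (2 * (m + 1)))) (hσ : σ ∈ matchings (m + 1))
    (k : Fin (m + 1)) (hk : σ (lo k) = i ∧ σ (hi k) = j) :
    ∃ σ' ∈ matchings m,
      ((Finset.univ.erase k).image
          (fun l : Fin (m + 1) => ({σ (lo l), σ (hi l)} : Finset (Fin (2 * (m + 1)))))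
        = Finset.univ.image
          (fun l : Fin m =>
            ({delEmb i j hij.ne (σ' (lo l)), delEmb i j hij.ne (σ' (hi l))} :
              Finset (Fin (2 * (m + 1)))))) ∧
      (Equiv.Perm.sign σ : ℤ) = (-1) ^ (i.val + j.val + 1) * (Equiv.Perm.sign σ' : ℤ) := by
  classical
  obtain ⟨hk1, hk2⟩ := hk
  rw [matchings, Finset.mem_filter] at hσ
  obtain ⟨-, h1, h2⟩ := hσ
  have hlh : (lo k : Fin (2 * (m + 1))) < hi k := by
    rw [Fin.lt_def, lo_val, hi_val]; omega
  set W : Equiv.Perm (Fin (2 * (m + 1))) := Wp2 i j with hWdef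
  set V : Equiv.Perm (Fin (2 * (m + 1))) := Wp2 (lo k) (hi k) with hVdef
  set π : Equiv.Perm (Fin (2 * (m + 1))) := W * σ * V⁻¹ with hπdef
  have hVlo : V (lo k) = zeroF m := Wp2_apply_left hlh
  have hVhi : V (hi k) = oneF m := Wp2_apply_right hlh
  have hWi : W i = zeroF m := Wp2_apply_left hij
  have hWj : W j = oneF m := Wp2_apply_right hij
  have hπ0 : π (zeroF m) = zeroF m := by
    rw [hπdef]
    simp only [Equiv.Perm.mul_apply]
    rw [← hVlo, Equiv.Perm.inv_def, Equiv.symm_apply_apply, hk1, hWi, hVlo]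
  have hπ1 : π (oneF m) = oneF m := by
    rw [hπdef]
    simp only [Equiv.Perm.mul_apply]
    rw [← hVhi, Equiv.Perm.inv_def, Equiv.symm_apply_apply, hk2, hWj, hVhi]
  have hsmall : ∀ x : Fin (2 * (m + 1)), x.val < 2 → x = zeroF m ∨ x = oneF m := by
    intro x hx
    rcases (show x.val = 0 ∨ x.val = 1 by omega) with h | h
    · exact Or.inl (Fin.ext h)
    · exact Or.inr (Fin.ext h)
  have hπpred : ∀ x : Fin (2 * (m + 1)), 2 ≤ x.val ↔ 2 ≤ (π x).val := by
    intro x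
    constructor
    · intro hx
      by_contra hc
      push_neg at hc
      rcases hsmall _ hc with h | h
      · have hx0 : x = zeroF m := π.injective (h.trans hπ0.symm)
        rw [hx0] at hx
        exact absurd hx (by norm_num [zeroF])
      · have hx1 : x = oneF m := π.injective (h.trans hπ1.symm)
        rw [hx1] at hx
        exact absurd hx (by show ¬ (2 ≤ 1); omega)
    · intro hx
      by_contra hc
      push_neg at hc
      rcases hsmall _ hc with h | h
      · rw [h, hπ0] at hx; exact absurd hx (by norm_num [zeroF])
      · rw [h, hπ1] at hx; exact absurd hx (by show ¬ (2 ≤ 1); omega)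
  set σ' : Equiv.Perm (Fin (2 * m)) :=
    (shiftEquiv' m).symm.permCongr (π.subtypePerm (fun x => (hπpred x).symm)) with hσ'def
  have hσ'app : ∀ t : Fin (2 * m), (σ' t).val = (π (pad t)).val - 2 := by
    intro t; rfl
  have keyPos : ∀ q : Fin (2 * m),
      delEmb i j hij.ne (σ' q) = σ (delEmb (lo k) (hi k) hlh.ne q) := by
    intro q
    obtain ⟨hQ1, hQ2⟩ := delEmb_mem hlh.ne q
    have hσQ1 : σ (delEmb (lo k) (hi k) hlh.ne q) ≠ i := by
      intro hcon; exact hQ1 (σ.injective (hcon.trans hk1.symm))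
    have hσQ2 : σ (delEmb (lo k) (hi k) hlh.ne q) ≠ j := by
      intro hcon; exact hQ2 (σ.injective (hcon.trans hk2.symm))
    obtain ⟨t, ht⟩ := delEmb_surj hij.ne hσQ1 hσQ2
    have hVQ : V (delEmb (lo k) (hi k) hlh.ne q) = pad q := Wp2_apply_delEmb hlh q
    have hWt : W (delEmb i j hij.ne t) = pad t := Wp2_apply_delEmb hij t
    have hπq : π (pad q) = pad t := by
      rw [hπdef]
      simp only [Equiv.Perm.mul_apply]
      rw [← hVQ, Equiv.Perm.inv_def, Equiv.symm_apply_apply, ← ht, hWt]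
    have hq : σ' q = t := by
      apply Fin.ext
      rw [hσ'app q, hπq]
      simp [pad]
    rw [hq, ht]
  have hskipLo : ∀ l : Fin m,
      delEmb (lo k) (hi k) hlh.ne (lo l) = lo (k.succAbove l) := by
    intro l
    apply Fin.ext
    have hsv := succAbove_val k l
    rw [delEmb_val hlh.ne hlh, lo_val]
    rw [lo_val k, hi_val k, lo_val (k.succAbove l)]
    rw [hsv]
    split_ifs <;> omega
  have hskipHi : ∀ l : Fin m,
      delEmb (lo k) (hi k) hlh.ne (hi l) = hi (k.succAbove l) := by
    intro l
    apply Fin.ext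
    have hsv := succAbove_val k l
    rw [delEmb_val hlh.ne hlh, hi_val]
    rw [lo_val k, hi_val k, hi_val (k.succAbove l)]
    rw [hsv]
    split_ifs <;> omega
  have hdlt : ∀ a b : Fin (2 * m),
      delEmb i j hij.ne a < delEmb i j hij.ne b ↔ a < b :=
    fun a b => (delEmb_strictMono hij.ne).lt_iff_lt
  have hmem : σ' ∈ matchings m := by
    rw [matchings, Finset.mem_filter]
    refine ⟨Finset.mem_univ _, ?_, ?_⟩
    · intro l
      have e1 := keyPos (lo l)
      have e2 := keyPos (hi l)
      rw [hskipLo l] at e1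
      rw [hskipHi l] at e2
      rw [← hdlt, e1, e2]
      exact h1 (k.succAbove l)
    · intro a b hab
      have e1 := keyPos (lo a)
      have e2 := keyPos (lo b)
      rw [hskipLo a] at e1
      rw [hskipLo b] at e2
      rw [← hdlt, e1, e2]
      exact h2 _ _ (Fin.succAbove_lt_succAbove_iff.mpr hab)
  refine ⟨σ', hmem, ?_, ?_⟩
  · ext S
    simp only [Finset.mem_image, Finset.mem_erase, Finset.mem_univ, true_and, and_true]
    constructor
    · rintro ⟨l, hlk, rfl⟩
      obtain ⟨l', rfl⟩ := Fin.exists_succAbove_eq hlk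
      refine ⟨l', ?_⟩
      have e1 := keyPos (lo l')
      have e2 := keyPos (hi l')
      rw [hskipLo l'] at e1
      rw [hskipHi l'] at e2
      rw [e1, e2]
    · rintro ⟨l, rfl⟩
      have e1 := keyPos (lo l)
      have e2 := keyPos (hi l)
      rw [hskipLo l] at e1
      rw [hskipHi l] at e2
      exact ⟨k.succAbove l, Fin.succAbove_ne k l, by rw [e1, e2]⟩
  · have hfix : ∀ x : Fin (2 * (m + 1)), π x ≠ x → 2 ≤ x.val := by
      intro x hx
      by_contra hc
      push_neg at hc
      rcases hsmall _ hc with h | h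
      · rw [h] at hx; exact hx hπ0
      · rw [h] at hx; exact hx hπ1
    have hsπ : Equiv.Perm.sign π = Equiv.Perm.sign σ' := by
      rw [hσ'def, Equiv.Perm.sign_permCongr, Equiv.Perm.sign_subtypePerm π (fun x => (hπpred x).symm) hfix]
    have hσdecomp : σ = W⁻¹ * π * V := by
      rw [hπdef]; group
    have hsV : ((Equiv.Perm.sign V : ℤˣ) : ℤ) = 1 := by
      rw [hVdef, Wp2_sign hlh]
      have hexp : (lo k).val + (hi k).val + 1 = 2 * (2 * k.val + 1) := by
        rw [lo_val, hi_val]; ring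
      rw [hexp, pow_mul]
      norm_num
    have hsW : ((Equiv.Perm.sign W : ℤˣ) : ℤ) = (-1) ^ (i.val + j.val + 1) := by
      rw [hWdef]; exact Wp2_sign hij
    have hsgn : (Equiv.Perm.sign σ : ℤˣ) =
        Equiv.Perm.sign W * Equiv.Perm.sign σ' * Equiv.Perm.sign V := by
      rw [hσdecomp, _root_.map_mul, _root_.map_mul, Equiv.Perm.sign_inv, hsπ]
    rw [hsgn]
    push_cast [Units.val_mul]
    rw [hsW, hsV]
    ring
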